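/- Let 0 < Δ < 1/2. Define on (0,1) the functions G₁(z) = (1−z)^{−Δ} Σ_{n=0}^∞ [(−2Δ)_n ((1−2Δ)/3)_n / (((2−4Δ)/3)_n n!)] z^n and G₂(z) = z^{(1+4Δ)/3} (1−z)^{−Δ} Σ_{n=0}^∞ [((1−2Δ)/3)_n ((2+2Δ)/3)_n / (((4+4Δ)/3)_n n!)] z^n. Then both G₁ and G₂ satisfy the second-order BPZ differential equation (3/2) z (z−1)² G''(z) + (z−1)[(2−Δ)z + 2Δ − 1] G'(z) − (1/2) Δ(Δ+1) z G(z) = 0 for all z in (0,1). -/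

import Mathlib

open Filter Set

/-- Pochhammer symbol `(x)_m = x(x+1)⋯(x+m−1)`, with `(x)_0 = 1`. -/
noncomputable def poch (x : ℝ) : ℕ → ℝ
  | 0 => 1
  | m + 1 => poch x m * (x + m)

lemma poch_pos {x : ℝ} (hx : 0 < x) : ∀ n, 0 < poch x n
  | 0 => one_pos
  | n + 1 => mul_pos (poch_pos hx n) (add_pos_of_pos_of_nonneg hx (Nat.cast_nonneg n))

lemma poch_le {x y : ℝ} (hx : 0 < x) (hxy : x ≤ y) : ∀ n, poch x n ≤ poch y n
  | 0 => le_refl 1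
  | n + 1 => by
      have h1 := poch_pos hx n
      have h2 : (0:ℝ) ≤ y + n := by
        have := Nat.cast_nonneg (α := ℝ) n; linarith
      exact mul_le_mul (poch_le hx hxy n) (by linarith) (by positivity) (by nlinarith [poch_le hx hxy n])

lemma abs_poch_le {x : ℝ} (hx : |x| ≤ 1) : ∀ n, |poch x n| ≤ (n.factorial : ℝ)
  | 0 => by simp [poch]
  | n + 1 => by
      have h1 : |x + (n:ℝ)| ≤ 1 + n := by
        refine (abs_add_le _ _).trans ?_
        simp [abs_of_nonneg (Nat.cast_nonneg (α := ℝ) n), hx]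
      calc |poch x (n+1)| = |poch x n| * |x + n| := by rw [poch]; exact abs_mul _ _
        _ ≤ (n.factorial : ℝ) * (1 + n) := by
            exact mul_le_mul (abs_poch_le hx n) h1 (abs_nonneg _) (by positivity)
        _ = ((n+1).factorial : ℝ) := by rw [Nat.factorial_succ]; push_cast; ring

noncomputable def hcoef (a b c : ℝ) (n : ℕ) : ℝ :=
  poch a n * poch b n / (poch c n * (n.factorial : ℝ))

lemma hcoef_bound {a b c : ℝ} (ha : |a| ≤ 1) (hb : 0 < b) (hbc : b ≤ c) (n : ℕ) :
    |hcoef a b c n| ≤ 1 := by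
  have hbp := poch_pos hb n
  have hcp := poch_pos (lt_of_lt_of_le hb hbc) n
  have hfac : (0:ℝ) < (n.factorial : ℝ) := by exact_mod_cast n.factorial_pos
  rw [hcoef, abs_div, abs_mul, abs_mul, abs_of_pos hbp, abs_of_pos hcp, abs_of_pos hfac,
    div_le_one (by positivity)]
  calc |poch a n| * poch b n ≤ (n.factorial : ℝ) * poch c n :=
        mul_le_mul (abs_poch_le ha n) (poch_le hb hbc n) hbp.le (by positivity)
    _ = poch c n * (n.factorial : ℝ) := mul_comm _ _

lemma hcoef_rec {a b c : ℝ} (hc : 0 < c) (n : ℕ) :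
    ((n:ℝ)+1) * ((n:ℝ)+c) * hcoef a b c (n+1) = ((n:ℝ)+a) * ((n:ℝ)+b) * hcoef a b c n := by
  have hcp : poch c n ≠ 0 := (poch_pos hc n).ne'
  have hcn : (c + (n:ℝ)) ≠ 0 := by
    have := Nat.cast_nonneg (α := ℝ) n; positivity
  have hfac : ((n.factorial : ℕ) : ℝ) ≠ 0 := by exact_mod_cast n.factorial_ne_zero
  simp only [hcoef, poch, Nat.factorial_succ]
  push_cast
  field_simp
  ring

noncomputable def psum (d : ℕ → ℝ) (x : ℝ) : ℝ := ∑' n, d n * x ^ n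

noncomputable def dshift (d : ℕ → ℝ) (n : ℕ) : ℝ := ((n:ℝ)+1) * d (n+1)

lemma summable_poly_geo (k : ℕ) {r : ℝ} (h0 : 0 < r) (h1 : r < 1) :
    Summable (fun n : ℕ => ((n:ℝ)+1)^k * r^n) := by
  have h : Summable (fun n : ℕ => (n:ℝ)^k * r^n) :=
    summable_pow_mul_geometric_of_norm_lt_one k (by rwa [Real.norm_eq_abs, abs_of_pos h0])
  have h2 : Summable (fun n : ℕ => ((n+1:ℕ):ℝ)^k * r^(n+1)) := (summable_nat_add_iff 1).2 h
  refine (h2.mul_left (1/r)).congr fun n => ?_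
  push_cast
  field_simp
  ring

lemma summable_master {d : ℕ → ℝ} (C : ℝ) (k : ℕ) (hd : ∀ n, |d n| ≤ C * ((n:ℝ)+1)^k)
    {z : ℝ} (hz0 : 0 < z) (hz1 : z < 1) : Summable fun n => d n * z ^ n := by
  have h : Summable (fun n : ℕ => C * (((n:ℝ)+1)^k * z^n)) :=
    (summable_poly_geo k hz0 hz1).mul_left C
  refine Summable.of_norm (Summable.of_nonneg_of_le (fun n => norm_nonneg _) (fun n => ?_) h)
  rw [Real.norm_eq_abs, abs_mul, abs_pow, abs_of_pos hz0]
  have h1 : (0:ℝ) ≤ z ^ n := by positivity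
  calc |d n| * z ^ n ≤ (C * ((n:ℝ)+1)^k) * z^n := mul_le_mul_of_nonneg_right (hd n) h1
    _ = C * (((n:ℝ)+1)^k * z^n) := by ring

lemma dshift_bound {d : ℕ → ℝ} (C : ℝ) (k : ℕ) (hd : ∀ n, |d n| ≤ C * ((n:ℝ)+1)^k) :
    ∀ n, |dshift d n| ≤ (2^k * C) * ((n:ℝ)+1)^(k+1) := by
  have hC : 0 ≤ C := le_trans (abs_nonneg (d 0)) (by simpa using hd 0)
  intro n
  have h1 : |d (n+1)| ≤ C * ((n:ℝ)+2)^k := by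
    have := hd (n+1); push_cast at this; convert this using 3 <;> ring
  have h2 : ((n:ℝ)+2)^k ≤ (2*((n:ℝ)+1))^k := by
    apply pow_le_pow_left₀ (by positivity) (by linarith)
  rw [dshift, abs_mul, abs_of_nonneg (by positivity : (0:ℝ) ≤ (n:ℝ)+1)]
  calc ((n:ℝ)+1) * |d (n+1)| ≤ ((n:ℝ)+1) * (C * (2*((n:ℝ)+1))^k) := by
        refine mul_le_mul_of_nonneg_left (h1.trans ?_) (by positivity)
        exact mul_le_mul_of_nonneg_left h2 hC
    _ = (2^k * C) * ((n:ℝ)+1)^(k+1) := by rw [mul_pow]; ring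

lemma hasDerivAt_psum {d : ℕ → ℝ} (C : ℝ) (k : ℕ) (hd : ∀ n, |d n| ≤ C * ((n:ℝ)+1)^k)
    {z : ℝ} (hz0 : 0 < z) (hz1 : z < 1) :
    HasDerivAt (psum d) (psum (dshift d) z) z := by
  have hC : 0 ≤ C := le_trans (abs_nonneg (d 0)) (by simpa using hd 0)
  set r : ℝ := (1+z)/2 with hr
  have hr0 : 0 < r := by rw [hr]; linarith
  have hr1 : r < 1 := by rw [hr]; linarith
  have hzr : z ∈ Metric.ball (0:ℝ) r := by
    rw [Metric.mem_ball, dist_zero_right, Real.norm_eq_abs, abs_of_pos hz0]; rw [hr]; linarith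
  have hu : Summable (fun n : ℕ => C/r * (((n:ℝ)+1)^(k+1) * r^n)) :=
    (summable_poly_geo (k+1) hr0 hr1).mul_left _
  have hbd : ∀ (n : ℕ) (y : ℝ), y ∈ Metric.ball (0:ℝ) r →
      ‖d n * ((n:ℝ) * y^(n-1))‖ ≤ C/r * (((n:ℝ)+1)^(k+1) * r^n) := by
    intro n y hy
    rw [Metric.mem_ball, dist_zero_right, Real.norm_eq_abs] at hy
    rw [Real.norm_eq_abs, abs_mul, abs_mul, abs_pow,
      abs_of_nonneg (Nat.cast_nonneg (α := ℝ) n)]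
    have hyr : |y| ^ (n-1) ≤ r ^ (n-1) := pow_le_pow_left₀ (abs_nonneg _) hy.le _
    calc |d n| * ((n:ℝ) * |y|^(n-1)) ≤ (C * ((n:ℝ)+1)^k) * ((n:ℝ) * r^(n-1)) := by
          refine mul_le_mul (hd n) (mul_le_mul_of_nonneg_left hyr (Nat.cast_nonneg _))
            (by positivity) (by positivity)
      _ ≤ C/r * (((n:ℝ)+1)^(k+1) * r^n) := by
          cases n with
          | zero => simp; positivity
          | succ m =>
              have : ((m+1:ℕ):ℝ) + 1 = (m:ℝ) + 2 := by push_cast; ring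
              rw [this]
              have h2 : r ^ (m+1-1) = r ^ m := rfl
              rw [h2, pow_succ]
              have hm2 : (0:ℝ) < (m:ℝ) + 2 := by positivity
              have key : ((m:ℝ)+2)^k * ((m:ℝ)+1) ≤ ((m:ℝ)+2)^(k+1) := by
                rw [pow_succ]
                exact mul_le_mul_of_nonneg_left (by linarith) (by positivity)
              have : C * ((m:ℝ)+2)^k * (((m+1:ℕ):ℝ)) * r^m ≤ C * ((m:ℝ)+2)^(k+1) * r^m := by
                push_cast
                nlinarith [pow_nonneg hr0.le m, mul_le_mul_of_nonneg_left key hC]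
              calc C * ((m:ℝ)+2)^k * (((m+1:ℕ):ℝ) * r^m) =
                    C * ((m:ℝ)+2)^k * ((m+1:ℕ):ℝ) * r^m := by ring
                _ ≤ C * ((m:ℝ)+2)^(k+1) * r^m := this
                _ = C/r * (((m:ℝ)+2)^(k+1) * (r^m * r)) := by field_simp
  have key := hasDerivAt_tsum_of_isPreconnected hu Metric.isOpen_ball
      (convex_ball (0:ℝ) r).isPreconnected
      (g := fun n x => d n * x^n) (g' := fun n x => d n * ((n:ℝ) * x^(n-1)))
      (fun n y _ => (hasDerivAt_pow n y).const_mul (d n))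
      hbd hzr (summable_master C k hd hz0 hz1) hzr
  have hsum' : Summable (fun n => d n * ((n:ℝ) * z^(n-1))) :=
    Summable.of_norm (Summable.of_nonneg_of_le (fun n => norm_nonneg _)
      (fun n => hbd n z hzr) hu)
  have heq : (∑' n, d n * ((n:ℝ) * z^(n-1))) = psum (dshift d) z := by
    rw [Summable.tsum_eq_zero_add hsum']
    simp only [Nat.cast_zero, zero_mul, mul_zero, zero_add]
    refine tsum_congr fun n => ?_
    simp only [psum, dshift, Nat.add_sub_cancel]
    push_cast
    ring
  rw [← heq]
  exact key

lemma hyper_ode {a b c : ℝ} (hc : 0 < c) (hbd : ∀ n, |hcoef a b c n| ≤ 1)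
    {z : ℝ} (hz0 : 0 < z) (hz1 : z < 1) :
    z*(1-z) * psum (dshift (dshift (hcoef a b c))) z
      + (c - (a+b+1)*z) * psum (dshift (hcoef a b c)) z
      - a*b * psum (hcoef a b c) z = 0 := by
  set d0 : ℕ → ℝ := hcoef a b c with hd0def
  have hb0 : ∀ n, |d0 n| ≤ 1 * ((n:ℝ)+1)^0 := fun n => by simpa using hbd n
  have hb1 := dshift_bound 1 0 hb0
  have hb2 := dshift_bound (2^0*1) 1 hb1
  have hS0 : Summable (fun n => d0 n * z^n) := summable_master _ _ hb0 hz0 hz1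
  have hS1 : Summable (fun n => dshift d0 n * z^n) := summable_master _ _ hb1 hz0 hz1
  have hS2 : Summable (fun n => dshift (dshift d0) n * z^n) := summable_master _ _ hb2 hz0 hz1
  have hba : ∀ n : ℕ, |(n:ℝ) * dshift d0 n| ≤ 1 * ((n:ℝ)+1)^2 := by
    intro n
    rw [abs_mul, abs_of_nonneg (Nat.cast_nonneg (α := ℝ) n)]
    have h := hb1 n
    norm_num at h
    have h0 : (0:ℝ) ≤ (n:ℝ) := Nat.cast_nonneg n
    have h2 : (0:ℝ) ≤ |dshift d0 n| := abs_nonneg _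
    nlinarith
  have hSa : Summable (fun n : ℕ => ((n:ℝ) * dshift d0 n) * z^n) := summable_master _ _ hba hz0 hz1
  have hbb : ∀ n : ℕ, |(n:ℝ)*((n:ℝ)-1) * d0 n| ≤ 1 * ((n:ℝ)+1)^2 := by
    intro n
    rw [abs_mul, abs_mul]
    have h0 : (0:ℝ) ≤ (n:ℝ) := Nat.cast_nonneg n
    have h1 : |((n:ℝ))| = (n:ℝ) := abs_of_nonneg h0
    have h2 : |(n:ℝ)-1| ≤ (n:ℝ)+1 := by rw [abs_le]; constructor <;> linarith
    have h3 := hbd n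
    have h4 : (0:ℝ) ≤ |d0 n| := abs_nonneg _
    have e1 : |(n:ℝ)| ≤ (n:ℝ)+1 := by rw [h1]; linarith
    calc |(n:ℝ)| * |(n:ℝ)-1| * |d0 n|
        ≤ (((n:ℝ)+1) * ((n:ℝ)+1)) * 1 :=
          mul_le_mul (mul_le_mul e1 h2 (abs_nonneg _) (by positivity)) h3 h4 (by positivity)
      _ = 1 * ((n:ℝ)+1)^2 := by ring
  have hSb : Summable (fun n : ℕ => ((n:ℝ)*((n:ℝ)-1) * d0 n) * z^n) := summable_master _ _ hbb hz0 hz1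
  have hbc' : ∀ n : ℕ, |(n:ℝ) * d0 n| ≤ 1 * ((n:ℝ)+1)^1 := by
    intro n
    rw [abs_mul, abs_of_nonneg (Nat.cast_nonneg (α := ℝ) n)]
    have h3 := hbd n
    have h0 : (0:ℝ) ≤ (n:ℝ) := Nat.cast_nonneg n
    have h4 : (0:ℝ) ≤ |d0 n| := abs_nonneg _
    nlinarith
  have hSc : Summable (fun n : ℕ => ((n:ℝ) * d0 n) * z^n) := summable_master _ _ hbc' hz0 hz1
  -- shifting identities
  have cA : (∑' n : ℕ, ((n:ℝ) * dshift d0 n) * z^n) = z * ∑' n, dshift (dshift d0) n * z^n := by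
    rw [Summable.tsum_eq_zero_add hSa, ← tsum_mul_left]
    norm_num
    refine tsum_congr fun n => ?_
    simp only [dshift]
    push_cast
    ring
  have cB : (∑' n : ℕ, ((n:ℝ)*((n:ℝ)-1) * d0 n) * z^n)
      = z * (z * ∑' n, dshift (dshift d0) n * z^n) := by
    rw [Summable.tsum_eq_zero_add hSb, Summable.tsum_eq_zero_add ((summable_nat_add_iff 1).2 hSb),
      ← tsum_mul_left, ← tsum_mul_left]
    norm_num
    refine tsum_congr fun n => ?_
    simp only [dshift]
    push_cast
    ring
  have cC : (∑' n : ℕ, ((n:ℝ) * d0 n) * z^n) = z * ∑' n, dshift d0 n * z^n := by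
    rw [Summable.tsum_eq_zero_add hSc, ← tsum_mul_left]
    norm_num
    refine tsum_congr fun n => ?_
    simp only [dshift]
    push_cast
    ring
  -- termwise vanishing
  have hterm : ∀ n : ℕ, ((n:ℝ) * dshift d0 n) * z^n - ((n:ℝ)*((n:ℝ)-1) * d0 n) * z^n
      + c * (dshift d0 n * z^n) - (a+b+1) * (((n:ℝ) * d0 n) * z^n)
      - a*b * (d0 n * z^n) = 0 := by
    intro n
    have hr := hcoef_rec (a := a) (b := b) hc n
    simp only [dshift, hd0def]
    linear_combination z^n * hr
  have hZero : (∑' n : ℕ, ((n:ℝ) * dshift d0 n) * z^n) - (∑' n : ℕ, ((n:ℝ)*((n:ℝ)-1) * d0 n) * z^n)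
      + c * (∑' n, dshift d0 n * z^n) - (a+b+1) * (∑' n : ℕ, ((n:ℝ) * d0 n) * z^n)
      - a*b * (∑' n, d0 n * z^n) = 0 := by
    rw [← tsum_mul_left (a := c), ← tsum_mul_left (a := a+b+1), ← tsum_mul_left (a := a*b),
      ← Summable.tsum_sub hSa hSb, ← Summable.tsum_add (hSa.sub hSb) (hS1.mul_left c),
      ← Summable.tsum_sub ((hSa.sub hSb).add (hS1.mul_left c)) (hSc.mul_left (a+b+1)),
      ← Summable.tsum_sub (((hSa.sub hSb).add (hS1.mul_left c)).sub (hSc.mul_left (a+b+1)))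
        (hS0.mul_left (a*b))]
    rw [show (fun n : ℕ => ((n:ℝ) * dshift d0 n) * z^n - ((n:ℝ)*((n:ℝ)-1) * d0 n) * z^n
      + c * (dshift d0 n * z^n) - (a+b+1) * (((n:ℝ) * d0 n) * z^n)
      - a*b * (d0 n * z^n)) = fun _ => (0:ℝ) from funext hterm]
    exact tsum_zero
  rw [cA, cB, cC] at hZero
  simp only [psum]
  linear_combination hZero

lemma bpz_master (a b c s Δ : ℝ) (hc : 0 < c) (ha : |a| ≤ 1) (hb : 0 < b) (hbc : b ≤ c)
    (hkey : ∀ x A B u v w : ℝ,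
      x*(1-x)*w + (c - (a+b+1)*x)*v - a*b*u = 0 →
      (3/2)*x*(x-1)^2 *
        (s*(s-1)*B*(A*(1-x)*(1-x)*u) + 2*s*Δ*(B*x)*(A*(1-x)*u) + 2*s*(B*x)*(A*(1-x)*(1-x)*v)
          + Δ*(Δ+1)*(B*x*x)*(A*u) + 2*Δ*(B*x*x)*(A*(1-x)*v) + (B*x*x)*(A*(1-x)*(1-x)*w))
      + (x-1)*((2-Δ)*x+2*Δ-1) *
        (s*(B*x)*(A*(1-x)*(1-x)*u) + (B*x*x)*(Δ*(A*(1-x)*u)) + (B*x*x)*(A*(1-x)*(1-x)*v))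
      - (1/2)*Δ*(Δ+1)*x*((B*x*x)*(A*(1-x)*(1-x))*u) = 0) :
    ∀ z ∈ Set.Ioo (0:ℝ) 1,
      (3/2) * z * (z - 1)^2
          * deriv (deriv (fun x : ℝ => x^s * (1-x)^(-Δ) * psum (hcoef a b c) x)) z
        + (z - 1) * ((2 - Δ)*z + 2*Δ - 1)
          * deriv (fun x : ℝ => x^s * (1-x)^(-Δ) * psum (hcoef a b c) x) z
        - (1/2) * Δ * (Δ + 1) * z * (z^s * (1-z)^(-Δ) * psum (hcoef a b c) z) = 0 := by
  intro z hz
  obtain ⟨hz0, hz1⟩ := hz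
  have h1z : (0:ℝ) < 1 - z := by linarith
  set d0 : ℕ → ℝ := hcoef a b c with hd0def
  have hbd : ∀ n, |d0 n| ≤ 1 := fun n => hcoef_bound ha hb hbc n
  have hb0 : ∀ n, |d0 n| ≤ 1 * ((n:ℝ)+1)^0 := fun n => by simpa using hbd n
  have hb1 := dshift_bound 1 0 hb0
  have hzIoo : z ∈ Set.Ioo (0:ℝ) 1 := ⟨hz0, hz1⟩
  have hT0 : ∀ x, x ∈ Set.Ioo (0:ℝ) 1 → HasDerivAt (psum d0) (psum (dshift d0) x) x :=
    fun x hx => hasDerivAt_psum _ _ hb0 hx.1 hx.2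
  have hT1 : ∀ x, x ∈ Set.Ioo (0:ℝ) 1 →
      HasDerivAt (psum (dshift d0)) (psum (dshift (dshift d0)) x) x :=
    fun x hx => hasDerivAt_psum _ _ hb1 hx.1 hx.2
  have hW : ∀ x, x ∈ Set.Ioo (0:ℝ) 1 →
      HasDerivAt (fun y : ℝ => (1-y)^(-Δ)) (Δ * (1-x)^(-Δ-1)) x := by
    intro x hx
    have h2 : HasDerivAt (fun y : ℝ => 1 - y) (-1) x := (hasDerivAt_id x).const_sub 1
    have h3 := (Real.hasDerivAt_rpow_const (x := 1-x) (p := -Δ)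
      (Or.inl (by have := hx.2; intro hcon; nlinarith [hcon] : (1:ℝ)-x ≠ 0))).comp x h2
    refine h3.congr_deriv ?_
    ring
  have hGd : ∀ x, x ∈ Set.Ioo (0:ℝ) 1 →
      HasDerivAt (fun y : ℝ => y^s * (1-y)^(-Δ) * psum d0 y)
        (s * x^(s-1) * ((1-x)^(-Δ) * psum d0 x)
          + x^s * (Δ * ((1-x)^(-Δ-1) * psum d0 x))
          + x^s * ((1-x)^(-Δ) * psum (dshift d0) x)) x := by
    intro x hx
    have hA : HasDerivAt (fun y : ℝ => y^s) (s * x^(s-1)) x :=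
      Real.hasDerivAt_rpow_const (Or.inl hx.1.ne')
    have := (hA.mul (hW x hx)).mul (hT0 x hx)
    refine this.congr_deriv ?_
    simp only [Pi.mul_apply]
    ring
  -- second derivative at z
  have hA1 : HasDerivAt (fun y : ℝ => y^(s-1)) ((s-1) * z^(s-1-1)) z :=
    Real.hasDerivAt_rpow_const (Or.inl hz0.ne')
  have hA2 : HasDerivAt (fun y : ℝ => y^s) (s * z^(s-1)) z :=
    Real.hasDerivAt_rpow_const (Or.inl hz0.ne')
  have hW1 : HasDerivAt (fun y : ℝ => (1-y)^(-Δ-1)) ((Δ+1) * (1-z)^(-Δ-1-1)) z := by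
    have h2 : HasDerivAt (fun y : ℝ => 1 - y) (-1) z := (hasDerivAt_id z).const_sub 1
    have h3 := (Real.hasDerivAt_rpow_const (x := 1-z) (p := -Δ-1)
      (Or.inl h1z.ne')).comp z h2
    refine h3.congr_deriv ?_
    ring
  have q1 := (hA1.const_mul s).mul ((hW z hzIoo).mul (hT0 z hzIoo))
  have q2 := hA2.mul (((hW1.mul (hT0 z hzIoo)).const_mul Δ))
  have q3 := hA2.mul ((hW z hzIoo).mul (hT1 z hzIoo))
  have hd2v : HasDerivAt (fun x : ℝ => s * x^(s-1) * ((1-x)^(-Δ) * psum d0 x)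
        + x^s * (Δ * ((1-x)^(-Δ-1) * psum d0 x))
        + x^s * ((1-x)^(-Δ) * psum (dshift d0) x))
      (s*(s-1)*z^(s-2) * ((1-z)^(-Δ) * psum d0 z)
        + 2*s*Δ*z^(s-1) * ((1-z)^(-Δ-1) * psum d0 z)
        + 2*s*z^(s-1) * ((1-z)^(-Δ) * psum (dshift d0) z)
        + Δ*(Δ+1)*z^s * ((1-z)^(-Δ-2) * psum d0 z)
        + 2*Δ*z^s * ((1-z)^(-Δ-1) * psum (dshift d0) z)
        + z^s * ((1-z)^(-Δ) * psum (dshift (dshift d0)) z)) z := by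
    have := (q1.add q2).add q3
    refine this.congr_deriv ?_
    rw [show s-1-1 = s-2 by ring, show -Δ-1-1 = -Δ-2 by ring]
    simp only [Pi.mul_apply]
    ring
  have hev : deriv (fun y : ℝ => y^s * (1-y)^(-Δ) * psum d0 y)
      =ᶠ[nhds z] (fun x : ℝ => s * x^(s-1) * ((1-x)^(-Δ) * psum d0 x)
        + x^s * (Δ * ((1-x)^(-Δ-1) * psum d0 x))
        + x^s * ((1-x)^(-Δ) * psum (dshift d0) x)) := by
    filter_upwards [isOpen_Ioo.mem_nhds hzIoo] with x hx
    exact (hGd x hx).deriv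
  have hdd2 : deriv (deriv (fun y : ℝ => y^s * (1-y)^(-Δ) * psum d0 y)) z
      = s*(s-1)*z^(s-2) * ((1-z)^(-Δ) * psum d0 z)
        + 2*s*Δ*z^(s-1) * ((1-z)^(-Δ-1) * psum d0 z)
        + 2*s*z^(s-1) * ((1-z)^(-Δ) * psum (dshift d0) z)
        + Δ*(Δ+1)*z^s * ((1-z)^(-Δ-2) * psum d0 z)
        + 2*Δ*z^s * ((1-z)^(-Δ-1) * psum (dshift d0) z)
        + z^s * ((1-z)^(-Δ) * psum (dshift (dshift d0)) z) := by
    rw [hev.deriv_eq]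
    exact hd2v.deriv
  have hdd1 : deriv (fun y : ℝ => y^s * (1-y)^(-Δ) * psum d0 y) z
      = s * z^(s-1) * ((1-z)^(-Δ) * psum d0 z)
        + z^s * (Δ * ((1-z)^(-Δ-1) * psum d0 z))
        + z^s * ((1-z)^(-Δ) * psum (dshift d0) z) := (hGd z hzIoo).deriv
  rw [hdd2, hdd1]
  -- rpow reductions
  have ez2 : z^s = z^(s-2)*z*z := by
    rw [show z^(s-2)*z*z = z^(s-2)*z^(1:ℝ)*z^(1:ℝ) by rw [Real.rpow_one],
      ← Real.rpow_add hz0, ← Real.rpow_add hz0, show s-2+1+1 = s by ring]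
  have ez1 : z^(s-1) = z^(s-2)*z := by
    rw [show z^(s-2)*z = z^(s-2)*z^(1:ℝ) by rw [Real.rpow_one],
      ← Real.rpow_add hz0, show s-2+1 = s-1 by ring]
  have ew0 : (1-z)^(-Δ) = (1-z)^(-Δ-2)*(1-z)*(1-z) := by
    rw [show (1-z)^(-Δ-2)*(1-z)*(1-z) = (1-z)^(-Δ-2)*(1-z)^(1:ℝ)*(1-z)^(1:ℝ)
        by rw [Real.rpow_one],
      ← Real.rpow_add h1z, ← Real.rpow_add h1z, show -Δ-2+1+1 = -Δ by ring]
  have ew1 : (1-z)^(-Δ-1) = (1-z)^(-Δ-2)*(1-z) := by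
    rw [show (1-z)^(-Δ-2)*(1-z) = (1-z)^(-Δ-2)*(1-z)^(1:ℝ) by rw [Real.rpow_one],
      ← Real.rpow_add h1z, show -Δ-2+1 = -Δ-1 by ring]
  rw [ez2, ez1, ew0, ew1]
  have hyp := hyper_ode hc hbd hz0 hz1
  rw [← hd0def] at hyp
  linear_combination hkey z ((1-z)^(-Δ-2)) (z^(s-2)) (psum d0 z) (psum (dshift d0) z)
    (psum (dshift (dshift d0)) z) hyp

/-- Holomorphic Virasoro identity block `G^{σσσσ}_{(1,1)}(z)` of `⟨σσσσ⟩`. -/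
noncomputable def G1 (Δ z : ℝ) : ℝ :=
  (1 - z) ^ (-Δ) *
    ∑' n : ℕ,
      (poch (-2*Δ) n * poch ((1 - 2*Δ)/3) n
        / (poch ((2 - 4*Δ)/3) n * (n.factorial : ℝ))) * z ^ n

/-- Holomorphic Virasoro block `G^{σσσσ}_{(1,3)}(z)` of `ε = φ_{1,3}` in `⟨σσσσ⟩`. -/
noncomputable def G2 (Δ z : ℝ) : ℝ :=
  z ^ ((1 + 4*Δ)/3) * (1 - z) ^ (-Δ) *
    ∑' n : ℕ,
      (poch ((1 - 2*Δ)/3) n * poch ((2 + 2*Δ)/3) n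
        / (poch ((4 + 4*Δ)/3) n * (n.factorial : ℝ))) * z ^ n

/-- Both Virasoro blocks of `⟨σσσσ⟩` satisfy the second-order BPZ equation. -/
theorem stmt_15 (Δ : ℝ) (hΔ0 : 0 < Δ) (hΔ1 : Δ < 1/2) :
    ∀ z ∈ Set.Ioo (0 : ℝ) 1,
      ((3/2) * z * (z - 1)^2 * deriv (deriv (G1 Δ)) z
        + (z - 1) * ((2 - Δ)*z + 2*Δ - 1) * deriv (G1 Δ) z
        - (1/2) * Δ * (Δ + 1) * z * G1 Δ z = 0)
      ∧ ((3/2) * z * (z - 1)^2 * deriv (deriv (G2 Δ)) z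
        + (z - 1) * ((2 - Δ)*z + 2*Δ - 1) * deriv (G2 Δ) z
        - (1/2) * Δ * (Δ + 1) * z * G2 Δ z = 0) := by
  intro z hz
  constructor
  · have hG1 : G1 Δ = fun x : ℝ =>
        x^(0:ℝ) * (1-x)^(-Δ) * psum (hcoef (-2*Δ) ((1 - 2*Δ)/3) ((2 - 4*Δ)/3)) x := by
      funext x
      simp only [G1, psum, hcoef, Real.rpow_zero, one_mul]
    rw [hG1]
    exact bpz_master (-2*Δ) ((1 - 2*Δ)/3) ((2 - 4*Δ)/3) 0 Δ
      (by linarith)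
      (by rw [abs_of_nonpos (by linarith)]; linarith)
      (by linarith) (by linarith)
      (fun x A B u v w h => by linear_combination ((3/2)*(1-x)^3*x*x*A*B) * h)
      z hz
  · have hG2 : G2 Δ = fun x : ℝ =>
        x^((1 + 4*Δ)/3) * (1-x)^(-Δ) * psum (hcoef ((1 - 2*Δ)/3) ((2 + 2*Δ)/3) ((4 + 4*Δ)/3)) x := by
      funext x
      simp only [G2, psum, hcoef]
    rw [hG2]
    exact bpz_master ((1 - 2*Δ)/3) ((2 + 2*Δ)/3) ((4 + 4*Δ)/3) ((1 + 4*Δ)/3) Δ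
      (by linarith)
      (by rw [abs_of_nonneg (by linarith)]; linarith)
      (by linarith) (by linarith)
      (fun x A B u v w h => by linear_combination ((3/2)*(1-x)^3*x*x*A*B) * h)
      z hz
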